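/- Fix 1 ≤ p ≤ ∞ and k ∈ ℕ. In ℝ^{2^k} with the ℓ_p norm, let A = {0} ∪ {wᵢ}_{i=1}^{2^k} ∪ {eᵢ}_{i=1}^{2^k} where the eᵢ are the standard basis vectors and the wᵢ are the rows of the 2^k × 2^k Walsh matrix, so n = |A| = 2·2^k + 1. Then for every d ∈ ℕ, every D ≥ 1, and every linear map T : ℝ^{2^k} → ℝ^d satisfying ‖u − v‖_p ≤ ‖T(u) − T(v)‖_p ≤ D·‖u − v‖_p for all u, v ∈ A (where the target carries the ℓ_p norm on ℝ^d), one has D ≥ ((n−1)/(2d))^{|1/p − 1/2|}. -/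

import Mathlib

open scoped ENNReal

/-- The `2^k × 2^k` Walsh matrix, with rows and columns indexed by `Fin k → Bool`
(i.e. `𝔽₂^k`): its `(u, v)` entry is `(-1)^⟨u,v⟩` where `⟨u,v⟩ = #{i : uᵢ = vᵢ = 1}`.
This is the `k`-fold Kronecker power of `[[1,1],[1,-1]]`. -/
noncomputable def walshRow (k : ℕ) (u : Fin k → Bool) : (Fin k → Bool) → ℝ :=
  fun v => (-1 : ℝ) ^ (Finset.univ.filter fun i => u i && v i).card

/-- The point set `A = {0} ∪ {wᵢ} ∪ {eᵢ} ⊆ ℝ^{2^k}` consisting of the origin, the rows of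
the Walsh matrix, and the standard basis vectors, viewed inside `ℓ_p^{2^k}`. -/
noncomputable def walshPointSet (p : ℝ≥0∞) (k : ℕ) :
    Set (PiLp p fun _ : Fin k → Bool => ℝ) :=
  {0} ∪ Set.range (fun u => (WithLp.equiv p _).symm (walshRow k u)) ∪
    Set.range (fun u : Fin k → Bool => (WithLp.equiv p _).symm (Pi.single u 1))


/- ---------- scalar power-mean lemmas ---------- -/

lemma aux_sum_rpow_le_rpow_sum {ι : Type*} [Fintype ι] (h : ι → ℝ) (hh : ∀ j, 0 ≤ h j)
    {t : ℝ} (ht : 1 ≤ t) : ∑ j, h j ^ t ≤ (∑ j, h j) ^ t := by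
  have hs : 0 ≤ ∑ j, h j := Finset.sum_nonneg fun j _ => hh j
  calc ∑ j, h j ^ t ≤ ∑ j, h j * (∑ i, h i) ^ (t - 1) := by
        refine Finset.sum_le_sum fun j _ => ?_
        have hj : h j ≤ ∑ i, h i := Finset.single_le_sum (fun i _ => hh i) (Finset.mem_univ j)
        calc h j ^ t = h j ^ ((1:ℝ) + (t-1)) := by ring_nf
          _ = h j ^ (1:ℝ) * h j ^ (t-1) := Real.rpow_add' (hh j) (by simp; linarith)
          _ = h j * h j ^ (t-1) := by rw [Real.rpow_one]
          _ ≤ h j * (∑ i, h i) ^ (t-1) :=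
              mul_le_mul_of_nonneg_left (Real.rpow_le_rpow (hh j) hj (by linarith)) (hh j)
    _ = (∑ j, h j) * (∑ i, h i) ^ (t-1) := by rw [← Finset.sum_mul]
    _ = (∑ j, h j) ^ t := by
        rw [← Real.rpow_one_add' hs (by simp; linarith)]; ring_nf

lemma aux_root_antitone {ι : Type*} [Fintype ι] (g : ι → ℝ) (hg : ∀ j, 0 ≤ g j) {a b : ℝ}
    (ha : 0 < a) (hab : a ≤ b) :
    (∑ j, g j ^ b) ^ (1/b) ≤ (∑ j, g j ^ a) ^ (1/a) := by
  have hb : 0 < b := lt_of_lt_of_le ha hab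
  have ht : 1 ≤ b / a := (one_le_div ha).mpr hab
  have key : ∑ j, (g j ^ a) ^ (b/a) ≤ (∑ j, g j ^ a) ^ (b/a) :=
    aux_sum_rpow_le_rpow_sum _ (fun j => Real.rpow_nonneg (hg j) a) ht
  have h1 : ∀ j : ι, (g j ^ a) ^ (b/a) = g j ^ b := fun j => by
    rw [← Real.rpow_mul (hg j)]; congr 1; field_simp
  simp_rw [h1] at key
  have h2 := Real.rpow_le_rpow (Finset.sum_nonneg fun j _ => Real.rpow_nonneg (hg j) b) key
    (by positivity : (0:ℝ) ≤ 1/b)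
  rwa [← Real.rpow_mul (Finset.sum_nonneg fun j _ => Real.rpow_nonneg (hg j) a),
    show b/a * (1/b) = 1/a by field_simp] at h2

lemma aux_root_holder {ι : Type*} [Fintype ι] (g : ι → ℝ) (hg : ∀ j, 0 ≤ g j) {a b : ℝ}
    (ha : 0 < a) (hab : a ≤ b) :
    (∑ j, g j ^ a) ^ (1/a) ≤ (Fintype.card ι : ℝ) ^ (1/a - 1/b) * (∑ j, g j ^ b) ^ (1/b) := by
  have hb : 0 < b := lt_of_lt_of_le ha hab
  have ht : 1 ≤ b / a := (one_le_div ha).mpr hab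
  have key := Real.rpow_sum_le_const_mul_sum_rpow_of_nonneg (f := fun j => g j ^ a)
    (s := Finset.univ) ht (fun j _ => Real.rpow_nonneg (hg j) a)
  have h1 : ∀ j : ι, (g j ^ a) ^ (b/a) = g j ^ b := fun j => by
    rw [← Real.rpow_mul (hg j)]; congr 1; field_simp
  simp_rw [h1, Finset.card_univ] at key
  have hsb : 0 ≤ ∑ j, g j ^ b := Finset.sum_nonneg fun j _ => Real.rpow_nonneg (hg j) b
  have hsa : 0 ≤ ∑ j, g j ^ a := Finset.sum_nonneg fun j _ => Real.rpow_nonneg (hg j) a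
  have h2 := Real.rpow_le_rpow (Real.rpow_nonneg hsa _) key (by positivity : (0:ℝ) ≤ 1/b)
  rwa [← Real.rpow_mul hsa, show b/a * (1/b) = 1/a by field_simp,
    Real.mul_rpow (by positivity) hsb, ← Real.rpow_mul (by positivity),
    show (b/a - 1) * (1/b) = 1/a - 1/b by field_simp] at h2

lemma aux_finish {x D : ℝ} (hx : 0 ≤ x) (hD : 0 ≤ D) (h : x^2 ≤ D^2) : x ≤ D := by
  nlinarith

lemma aux_rpow_sq {x : ℝ} (hx : 0 ≤ x) (E : ℝ) : (x ^ E) ^ 2 = x ^ (2*E) := by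
  rw [← Real.rpow_natCast (x ^ E) 2, ← Real.rpow_mul hx]
  norm_num [mul_comm]


/- ---------- Walsh orthogonality and Parseval ---------- -/

lemma walsh_prod (k : ℕ) (u v : Fin k → Bool) :
    walshRow k u v = ∏ i, (if u i && v i then (-1:ℝ) else 1) := by
  rw [walshRow, ← Finset.prod_filter, Finset.prod_const]

lemma walsh_orth (k : ℕ) (v v' : Fin k → Bool) :
    ∑ u : Fin k → Bool, walshRow k u v * walshRow k u v'
      = if v = v' then ((2:ℝ)^k) else 0 := by
  have h : ∀ u : Fin k → Bool, walshRow k u v * walshRow k u v'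
      = ∏ i, ((if u i && v i then (-1:ℝ) else 1) * (if u i && v' i then (-1:ℝ) else 1)) := by
    intro u; rw [walsh_prod, walsh_prod, Finset.prod_mul_distrib]
  simp_rw [h]
  have hps := Finset.prod_univ_sum (fun _ : Fin k => (Finset.univ : Finset Bool))
    (fun i b => (if b && v i then (-1:ℝ) else 1) * (if b && v' i then (-1:ℝ) else 1))
  rw [Fintype.piFinset_univ] at hps
  rw [← hps]
  have hfac : ∀ i : Fin k,
      (∑ b : Bool, (if b && v i then (-1:ℝ) else 1) * (if b && v' i then (-1:ℝ) else 1))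
      = 1 + (if v i then (-1:ℝ) else 1) * (if v' i then (-1:ℝ) else 1) := by
    intro i; rw [Fintype.sum_bool]; simp [add_comm]
  simp_rw [hfac]
  by_cases hvv : v = v'
  · subst hvv
    simp only [if_pos rfl]
    have h2 : ∀ i : Fin k, 1 + (if v i then (-1:ℝ) else 1) * (if v i then (-1:ℝ) else 1) = 2 := by
      intro i; by_cases h : v i <;> simp [h] <;> norm_num
    simp_rw [h2]
    simp [Finset.prod_const]
  · rw [if_neg hvv]
    obtain ⟨i, hi⟩ : ∃ i, v i ≠ v' i := by
      by_contra hc; push_neg at hc; exact hvv (funext hc)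
    refine Finset.prod_eq_zero (Finset.mem_univ i) ?_
    rcases Bool.eq_false_or_eq_true (v i) with h1 | h1 <;>
      rcases Bool.eq_false_or_eq_true (v' i) with h2 | h2 <;>
      simp [h1, h2] at hi ⊢

lemma walsh_parseval (k : ℕ) (a : (Fin k → Bool) → ℝ) :
    ∑ u : Fin k → Bool, (∑ v, walshRow k u v * a v)^2 = (2:ℝ)^k * ∑ v, (a v)^2 := by
  have h1 : ∀ u : Fin k → Bool, (∑ v, walshRow k u v * a v)^2
      = ∑ v, ∑ v', a v * a v' * (walshRow k u v * walshRow k u v') := by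
    intro u
    rw [sq, Finset.sum_mul_sum]
    exact Finset.sum_congr rfl fun v _ => Finset.sum_congr rfl fun v' _ => by ring
  simp_rw [h1]
  rw [Finset.sum_comm]
  have h2 : ∀ v : Fin k → Bool,
      ∑ u : Fin k → Bool, ∑ v', a v * a v' * (walshRow k u v * walshRow k u v')
        = (2:ℝ)^k * (a v)^2 := by
    intro v
    rw [Finset.sum_comm]
    have h3 : ∀ v' : Fin k → Bool,
        ∑ u : Fin k → Bool, a v * a v' * (walshRow k u v * walshRow k u v')
          = a v * a v' * (if v = v' then ((2:ℝ)^k) else 0) := by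
      intro v'; rw [← Finset.mul_sum, walsh_orth]
    simp_rw [h3]
    simp [Finset.sum_ite_eq, mul_ite, sq]; ring
  simp_rw [h2]
  rw [← Finset.mul_sum]

/- ---------- vectors ---------- -/

noncomputable def eVec (p : ℝ≥0∞) (k : ℕ) (v : Fin k → Bool) :
    PiLp p (fun _ : Fin k → Bool => ℝ) := (WithLp.equiv p _).symm (Pi.single v 1)

noncomputable def wVec (p : ℝ≥0∞) (k : ℕ) (u : Fin k → Bool) :
    PiLp p (fun _ : Fin k → Bool => ℝ) := (WithLp.equiv p _).symm (walshRow k u)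

lemma eVec_mem (p : ℝ≥0∞) (k : ℕ) (v : Fin k → Bool) : eVec p k v ∈ walshPointSet p k :=
  Or.inr ⟨v, rfl⟩

lemma wVec_mem (p : ℝ≥0∞) (k : ℕ) (u : Fin k → Bool) : wVec p k u ∈ walshPointSet p k :=
  Or.inl (Or.inr ⟨u, rfl⟩)

lemma zero_mem_walshPointSet (p : ℝ≥0∞) (k : ℕ) : (0 : PiLp p fun _ : Fin k → Bool => ℝ) ∈ walshPointSet p k :=
  Or.inl (Or.inl rfl)

lemma wVec_decomp (p : ℝ≥0∞) (k : ℕ) (u : Fin k → Bool) :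
    wVec p k u = ∑ v, walshRow k u v • eVec p k v := by
  ext x
  rw [WithLp.ofLp_sum, Finset.sum_apply]
  have : ∀ v, (walshRow k u v • eVec p k v) x = if x = v then walshRow k u v else 0 := by
    intro v
    rw [PiLp.smul_apply, eVec, WithLp.equiv_symm_apply, PiLp.toLp_apply, Pi.single_apply, smul_eq_mul]
    by_cases h : x = v <;> simp [h]
  simp_rw [this]
  rw [Finset.sum_ite_eq Finset.univ x (fun v => walshRow k u v)]
  simp [wVec]

lemma walsh_abs (k : ℕ) (u v : Fin k → Bool) : ‖walshRow k u v‖ = 1 := by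
  rw [walshRow]
  simp

lemma card_bool_fun (k : ℕ) : (Fintype.card (Fin k → Bool) : ℝ) = (2:ℝ)^k := by
  simp

/- norms, p ≠ ∞ -/

lemma eVec_norm (p : ℝ≥0∞) [Fact (1 ≤ p)] (k : ℕ) (v : Fin k → Bool)
    (hr0 : 0 < p.toReal) : ‖eVec p k v‖ = 1 := by
  rw [PiLp.norm_eq_sum hr0]
  have h : ∀ x : Fin k → Bool, ‖eVec p k v x‖ ^ p.toReal = if x = v then 1 else 0 := by
    intro x
    rw [eVec, WithLp.equiv_symm_apply, PiLp.toLp_apply, Pi.single_apply]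
    by_cases h : x = v <;> simp [h, Real.zero_rpow hr0.ne', Real.one_rpow]
  simp_rw [h]
  rw [Finset.sum_ite_eq' Finset.univ v (fun _ => (1:ℝ))]
  simp [Real.one_rpow]

lemma wVec_norm (p : ℝ≥0∞) [Fact (1 ≤ p)] (k : ℕ) (u : Fin k → Bool)
    (hr0 : 0 < p.toReal) : ‖wVec p k u‖ = ((2:ℝ)^k) ^ (1 / p.toReal) := by
  rw [PiLp.norm_eq_sum hr0]
  have h : ∀ x : Fin k → Bool, ‖wVec p k u x‖ ^ p.toReal = 1 := by
    intro x
    show ‖walshRow k u x‖ ^ p.toReal = 1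
    rw [walsh_abs, Real.one_rpow]
  simp_rw [h]
  rw [Finset.sum_const, Finset.card_univ, nsmul_eq_mul, mul_one, card_bool_fun]

/- norms, p = ∞ -/

lemma eVec_norm_top (k : ℕ) (v : Fin k → Bool) : ‖eVec ⊤ k v‖ = 1 := by
  rw [PiLp.norm_eq_ciSup]
  refine le_antisymm (ciSup_le fun x => ?_) ?_
  · rw [eVec, WithLp.equiv_symm_apply, PiLp.toLp_apply, Pi.single_apply]
    by_cases h : x = v <;> simp [h]
  · have := le_ciSup (f := fun x => ‖eVec ⊤ k v x‖)
      (Set.Finite.bddAbove (Set.finite_range _)) v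
    simpa [eVec, Pi.single_apply] using this

lemma wVec_norm_top (k : ℕ) (u : Fin k → Bool) : ‖wVec ⊤ k u‖ = 1 := by
  rw [PiLp.norm_eq_ciSup]
  have h : ∀ x, ‖wVec ⊤ k u x‖ = 1 := fun x => walsh_abs k u x
  simp_rw [h]
  exact ciSup_const

/- ---------- main theorem ---------- -/


/-- Fix `1 ≤ p ≤ ∞` and `k`.  Any linear map `T : ℓ_p^{2^k} → ℓ_p^d`
which is non-contracting and `D`-Lipschitz on the `n = 2·2^k + 1` point set
`A = {0} ∪ {walsh rows} ∪ {standard basis}` satisfies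
`D ≥ ((n-1)/(2d))^{|1/p - 1/2|} = (2^k/d)^{|1/p - 1/2|}` (for `p = ∞`, `1/p := 0`). -/
theorem stmt_6 (p : ℝ≥0∞) [Fact (1 ≤ p)] (k : ℕ) (d : ℕ) (D : ℝ) (hD : 1 ≤ D)
    (T : PiLp p (fun _ : Fin k → Bool => ℝ) →ₗ[ℝ] PiLp p (fun _ : Fin d => ℝ))
    (hT : ∀ u ∈ walshPointSet p k, ∀ v ∈ walshPointSet p k,
      ‖u - v‖ ≤ ‖T u - T v‖ ∧ ‖T u - T v‖ ≤ D * ‖u - v‖) :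
    ((2 : ℝ) ^ k / d) ^ |1 / p.toReal - 1 / 2| ≤ D := by
  have hp1 : 1 ≤ p := Fact.out
  have hD0 : (0:ℝ) ≤ D := le_trans zero_le_one hD
  set m : ℝ := (2:ℝ)^k with hm_def
  have hm0 : (0:ℝ) < m := by positivity
  rcases Nat.eq_zero_or_pos d with hd0 | hd1
  · subst hd0
    simp only [Nat.cast_zero, div_zero]
    exact le_trans (Real.zero_rpow_le_one _) hD
  have hdR : (0:ℝ) < (d:ℝ) := by exact_mod_cast hd1
  -- basic consequences of hT
  have hTx : ∀ x ∈ walshPointSet p k, ‖x‖ ≤ ‖T x‖ ∧ ‖T x‖ ≤ D * ‖x‖ := by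
    intro x hx
    have h := hT x hx 0 (zero_mem_walshPointSet p k)
    simpa [map_zero] using h
  -- Parseval
  have hTwj : ∀ (u : Fin k → Bool) (j : Fin d),
      T (wVec p k u) j = ∑ v, walshRow k u v * T (eVec p k v) j := by
    intro u j
    rw [wVec_decomp, map_sum]
    rw [WithLp.ofLp_sum, Finset.sum_apply]
    exact Finset.sum_congr rfl fun v _ => by rw [map_smul]; rfl
  set Q : PiLp p (fun _ : Fin d => ℝ) → ℝ := fun y => ∑ j, (y j)^2 with hQ_def
  have hQ0 : ∀ y, 0 ≤ Q y := fun y => Finset.sum_nonneg fun j _ => sq_nonneg _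
  have hQeq : ∀ y : PiLp p (fun _ : Fin d => ℝ), ∑ j, ‖y j‖ ^ (2:ℝ) = Q y := by
    intro y
    refine Finset.sum_congr rfl fun j _ => ?_
    rw [show (2:ℝ) = ((2:ℕ):ℝ) by norm_num, Real.rpow_natCast, Real.norm_eq_abs, sq_abs]
  have hPar : ∑ u, Q (T (wVec p k u)) = m * ∑ v, Q (T (eVec p k v)) := by
    have h1 : ∀ u : Fin k → Bool, Q (T (wVec p k u))
        = ∑ j, (∑ v, walshRow k u v * T (eVec p k v) j)^2 := by
      intro u
      exact Finset.sum_congr rfl fun j _ => by rw [hTwj]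
    simp_rw [h1]
    rw [Finset.sum_comm]
    have h2 : ∀ j : Fin d, ∑ u : Fin k → Bool, (∑ v, walshRow k u v * T (eVec p k v) j)^2
        = m * ∑ v, (T (eVec p k v) j)^2 := fun j => walsh_parseval k _
    simp_rw [h2]
    rw [← Finset.mul_sum, Finset.sum_comm]
  -- lower/upper bounds on individual norms
  have hTe_ub : ∀ v, ‖T (eVec p k v)‖ ≤ D * ‖eVec p k v‖ := fun v => (hTx _ (eVec_mem p k v)).2
  have hTe_lb : ∀ v, ‖eVec p k v‖ ≤ ‖T (eVec p k v)‖ := fun v => (hTx _ (eVec_mem p k v)).1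
  have hTw_ub : ∀ u, ‖T (wVec p k u)‖ ≤ D * ‖wVec p k u‖ := fun u => (hTx _ (wVec_mem p k u)).2
  have hTw_lb : ∀ u, ‖wVec p k u‖ ≤ ‖T (wVec p k u)‖ := fun u => (hTx _ (wVec_mem p k u)).1
  -- case analysis
  by_cases htop : p = ⊤
  · -- p = ∞
    subst htop
    have hE : |1 / (⊤ : ℝ≥0∞).toReal - 1/2| = (1:ℝ)/2 := by
      simp [ENNReal.toReal_top]
    rw [hE]
    haveI : Nonempty (Fin d) := Fin.pos_iff_nonempty.mp hd1
    have hjle : ∀ (y : PiLp ⊤ (fun _ : Fin d => ℝ)) (j : Fin d), ‖y j‖ ≤ ‖y‖ := by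
      intro y j
      rw [PiLp.norm_eq_ciSup]
      exact le_ciSup (f := fun i => ‖y i‖) (Set.Finite.bddAbove (Set.finite_range _)) j
    have hnorm_le : ∀ y : PiLp ⊤ (fun _ : Fin d => ℝ), ‖y‖^2 ≤ Q y := by
      intro y
      rw [PiLp.norm_eq_ciSup]
      have hsup : (⨆ j, ‖y j‖) ≤ Real.sqrt (Q y) := by
        refine ciSup_le fun j => ?_
        have h1 : (y j)^2 ≤ Q y := Finset.single_le_sum
          (f := fun i => (y i)^2) (fun i _ => sq_nonneg _) (Finset.mem_univ j)
        have := Real.sqrt_le_sqrt h1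
        rwa [Real.sqrt_sq_eq_abs, ← Real.norm_eq_abs] at this
      have h2 : (⨆ j, ‖y j‖) ^ 2 ≤ Real.sqrt (Q y) ^ 2 := by
        apply pow_le_pow_left₀ _ hsup
        exact le_ciSup_of_le (Set.Finite.bddAbove (Set.finite_range _))
          (Classical.arbitrary _) (norm_nonneg _)
      rwa [Real.sq_sqrt (hQ0 y)] at h2
    -- Q (T e v) ≥ 1
    have hQe : ∀ v, (1:ℝ) ≤ Q (T (eVec ⊤ k v)) := by
      intro v
      have h1 : (1:ℝ) ≤ ‖T (eVec ⊤ k v)‖ := by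
        have := hTe_lb v; rwa [eVec_norm_top] at this
      calc (1:ℝ) = 1^2 := by norm_num
        _ ≤ ‖T (eVec ⊤ k v)‖^2 := by apply pow_le_pow_left₀ zero_le_one h1
        _ ≤ _ := hnorm_le _
    -- Q (T w u) ≤ d * D^2
    have hQw : ∀ u, Q (T (wVec ⊤ k u)) ≤ (d:ℝ) * D^2 := by
      intro u
      have h1 : ‖T (wVec ⊤ k u)‖ ≤ D := by
        have := hTw_ub u; rwa [wVec_norm_top, mul_one] at this
      calc Q (T (wVec ⊤ k u)) = ∑ j, (T (wVec ⊤ k u) j)^2 := rfl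
        _ ≤ ∑ _j : Fin d, D^2 := by
            refine Finset.sum_le_sum fun j _ => ?_
            have h2 : ‖T (wVec ⊤ k u) j‖ ≤ D := le_trans (hjle _ j) h1
            calc (T (wVec ⊤ k u) j)^2 = ‖T (wVec ⊤ k u) j‖^2 := by
                  rw [Real.norm_eq_abs, sq_abs]
              _ ≤ D^2 := pow_le_pow_left₀ (norm_nonneg _) h2 2
        _ = (d:ℝ) * D^2 := by rw [Finset.sum_const, Finset.card_univ, Fintype.card_fin,
              nsmul_eq_mul]
    -- combine
    have hlow : m * m ≤ ∑ u, Q (T (wVec ⊤ k u)) := by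
      rw [hPar]
      have : m * m = m * ((Fintype.card (Fin k → Bool) : ℝ) * 1) := by
        rw [card_bool_fun, mul_one]
      rw [this]
      refine mul_le_mul_of_nonneg_left ?_ hm0.le
      calc (Fintype.card (Fin k → Bool) : ℝ) * 1
          = ∑ _v : Fin k → Bool, (1:ℝ) := by rw [Finset.sum_const, Finset.card_univ, nsmul_eq_mul]
        _ ≤ _ := Finset.sum_le_sum fun v _ => hQe v
    have hup : ∑ u, Q (T (wVec ⊤ k u)) ≤ m * ((d:ℝ) * D^2) := by
      calc ∑ u, Q (T (wVec ⊤ k u)) ≤ ∑ _u : Fin k → Bool, (d:ℝ) * D^2 :=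
            Finset.sum_le_sum fun u _ => hQw u
        _ = m * ((d:ℝ) * D^2) := by
            rw [Finset.sum_const, Finset.card_univ, nsmul_eq_mul, card_bool_fun]
    have hkey : m ≤ (d:ℝ) * D^2 := by
      have := le_trans hlow hup
      exact le_of_mul_le_mul_left (by linarith [this]) hm0
    refine aux_finish (Real.rpow_nonneg (by positivity) _) hD0 ?_
    rw [aux_rpow_sq (by positivity : (0:ℝ) ≤ m / d)]
    rw [show (2:ℝ) * (1/2) = 1 by norm_num, Real.rpow_one]
    rw [div_le_iff₀ hdR]
    linarith [hkey]
  · -- p ≠ ∞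
    set r : ℝ := p.toReal with hr_def
    have hr1 : 1 ≤ r := by
      have := ENNReal.toReal_mono htop hp1
      simpa using this
    have hr0 : 0 < r := lt_of_lt_of_le zero_lt_one hr1
    have hnorm_r : ∀ y : PiLp p (fun _ : Fin d => ℝ), ‖y‖ = (∑ j, ‖y j‖ ^ r) ^ (1/r) :=
      fun y => PiLp.norm_eq_sum hr0 y
    rcases le_total r 2 with hr2 | hr2
    · -- 1 ≤ r ≤ 2
      have hE : |1/r - 1/2| = 1/r - 1/2 := by
        apply abs_of_nonneg
        have : 1/2 ≤ 1/r := by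
          apply one_div_le_one_div_of_le hr0 hr2
        linarith
      -- upper bound Q (T e v) ≤ D^2
      have hQe : ∀ v, Q (T (eVec p k v)) ≤ D^2 := by
        intro v
        have h2 : ‖T (eVec p k v)‖ ≤ D := by
          have := hTe_ub v; rwa [eVec_norm p k v hr0, mul_one] at this
        have h3 : (∑ j, ‖T (eVec p k v) j‖ ^ (2:ℝ)) ^ (1/(2:ℝ)) ≤ ‖T (eVec p k v)‖ := by
          rw [hnorm_r]
          exact aux_root_antitone _ (fun j => norm_nonneg _) hr0 hr2
        have h4 := le_trans h3 h2
        have h5 : (0:ℝ) ≤ (∑ j, ‖T (eVec p k v) j‖ ^ (2:ℝ)) ^ (1/(2:ℝ)) :=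
          Real.rpow_nonneg (Finset.sum_nonneg fun j _ => Real.rpow_nonneg (norm_nonneg _) _) _
        have h6 := pow_le_pow_left₀ h5 h4 2
        rwa [aux_rpow_sq (Finset.sum_nonneg fun j _ => Real.rpow_nonneg (norm_nonneg _) _),
          show (2:ℝ) * (1/2) = 1 by norm_num, Real.rpow_one, hQeq] at h6
      -- lower bound Q (T w u) ≥ d^(1-2/r) * m^(2/r)
      have hQw : ∀ u, (d:ℝ)^(1 - 2/r) * m^(2/r) ≤ Q (T (wVec p k u)) := by
        intro u
        have h1 : m^(1/r) ≤ ‖T (wVec p k u)‖ := by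
          have := hTw_lb u; rwa [wVec_norm p k u hr0] at this
        have h2 : ‖T (wVec p k u)‖
            ≤ (d:ℝ)^(1/r - 1/2) * (∑ j, ‖T (wVec p k u) j‖ ^ (2:ℝ)) ^ (1/(2:ℝ)) := by
          rw [hnorm_r]
          have := aux_root_holder (fun j => ‖T (wVec p k u) j‖)
            (fun j => norm_nonneg _) hr0 hr2
          simpa using this
        set X : ℝ := (∑ j, ‖T (wVec p k u) j‖ ^ (2:ℝ)) ^ (1/(2:ℝ)) with hX_def
        have hX0 : 0 ≤ X :=
          Real.rpow_nonneg (Finset.sum_nonneg fun j _ => Real.rpow_nonneg (norm_nonneg _) _) _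
        have hc0 : (0:ℝ) < (d:ℝ)^(1/r - 1/2) := Real.rpow_pos_of_pos hdR _
        have h3 : m^(1/r) / (d:ℝ)^(1/r - 1/2) ≤ X := by
          rw [div_le_iff₀ hc0]
          calc m^(1/r) ≤ (d:ℝ)^(1/r - 1/2) * X := le_trans h1 h2
            _ = X * (d:ℝ)^(1/r - 1/2) := mul_comm _ _
        have h4 := pow_le_pow_left₀ (by positivity) h3 2
        have h5 : X^2 = Q (T (wVec p k u)) := by
          rw [hX_def, aux_rpow_sq (Finset.sum_nonneg fun j _ => Real.rpow_nonneg (norm_nonneg _) _),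
            show (2:ℝ) * (1/2) = 1 by norm_num, Real.rpow_one, hQeq]
        rw [h5] at h4
        have hpow : (m ^ (1/r) / (d:ℝ) ^ (1/r - 1/2)) ^ 2 = (d:ℝ)^(1 - 2/r) * m^(2/r) := by
          rw [div_pow, aux_rpow_sq hm0.le, aux_rpow_sq hdR.le,
            show (2:ℝ) * (1/r) = 2/r by ring, show (2:ℝ) * (1/r - 1/2) = 2/r - 1 by ring,
            div_eq_mul_inv, ← Real.rpow_neg hdR.le, show -(2/r - 1) = 1 - 2/r by ring, mul_comm]
        rw [hpow] at h4
        exact h4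
      -- combine
      have hlow : m * ((d:ℝ)^(1 - 2/r) * m^(2/r)) ≤ ∑ u, Q (T (wVec p k u)) := by
        calc m * ((d:ℝ)^(1 - 2/r) * m^(2/r))
            = ∑ _u : Fin k → Bool, ((d:ℝ)^(1 - 2/r) * m^(2/r)) := by
              rw [Finset.sum_const, Finset.card_univ, nsmul_eq_mul, card_bool_fun]
          _ ≤ _ := Finset.sum_le_sum fun u _ => hQw u
      have hup : ∑ u, Q (T (wVec p k u)) ≤ m * (m * D^2) := by
        rw [hPar]
        refine mul_le_mul_of_nonneg_left ?_ hm0.le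
        calc ∑ v, Q (T (eVec p k v)) ≤ ∑ _v : Fin k → Bool, D^2 :=
              Finset.sum_le_sum fun v _ => hQe v
          _ = m * D^2 := by rw [Finset.sum_const, Finset.card_univ, nsmul_eq_mul, card_bool_fun]
      have hkey : (d:ℝ)^(1 - 2/r) * m^(2/r) ≤ m * D^2 :=
        le_of_mul_le_mul_left (le_trans hlow hup) hm0
      rw [hE]
      refine aux_finish (Real.rpow_nonneg (by positivity) _) hD0 ?_
      rw [aux_rpow_sq (by positivity : (0:ℝ) ≤ m / d),
        show (2:ℝ) * (1/r - 1/2) = 2/r - 1 by ring,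
        Real.div_rpow hm0.le hdR.le, div_le_iff₀ (Real.rpow_pos_of_pos hdR _)]
      -- goal: m^(2/r-1) ≤ D^2 * d^(2/r-1)
      -- from hkey : d^(1-2/r) * m^(2/r) ≤ m * D^2
      have hd1' : (d:ℝ)^(1 - 2/r) * (d:ℝ)^(2/r - 1) = 1 := by
        rw [← Real.rpow_add hdR]; norm_num
      have hm1' : m^(2/r - 1) * m = m^(2/r) := by
        nth_rewrite 2 [show m = m^(1:ℝ) from (Real.rpow_one m).symm]
        rw [← Real.rpow_add hm0]
        congr 1
        ring
      have := mul_le_mul_of_nonneg_right hkey (Real.rpow_nonneg hdR.le (2/r - 1))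
      rw [mul_comm ((d:ℝ)^(1 - 2/r)) (m^(2/r)), mul_assoc, hd1', mul_one] at this
      have h7 : m * m^(2/r - 1) ≤ m * (D^2 * (d:ℝ)^(2/r - 1)) := by
        calc m * m^(2/r - 1) = m^(2/r) := by rw [mul_comm]; exact hm1'
          _ ≤ m * D^2 * (d:ℝ)^(2/r - 1) := this
          _ = m * (D^2 * (d:ℝ)^(2/r - 1)) := by ring
      exact le_of_mul_le_mul_left h7 hm0
    · -- 2 ≤ r
      have hE : |1/r - 1/2| = 1/2 - 1/r := by
        rw [abs_of_nonpos (by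
          have : 1/r ≤ 1/2 := one_div_le_one_div_of_le (by norm_num) hr2
          linarith)]
        ring
      have hQe : ∀ v, (1:ℝ) ≤ Q (T (eVec p k v)) := by
        intro v
        have h1 : (1:ℝ) ≤ ‖T (eVec p k v)‖ := by
          have := hTe_lb v; rwa [eVec_norm p k v hr0] at this
        have h3 : ‖T (eVec p k v)‖ ≤ (∑ j, ‖T (eVec p k v) j‖ ^ (2:ℝ)) ^ (1/(2:ℝ)) := by
          rw [hnorm_r]
          exact aux_root_antitone _ (fun j => norm_nonneg _) (by norm_num) hr2
        have h4 := le_trans h1 h3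
        have h6 := pow_le_pow_left₀ zero_le_one h4 2
        rwa [one_pow,
          aux_rpow_sq (Finset.sum_nonneg fun j _ => Real.rpow_nonneg (norm_nonneg _) _),
          show (2:ℝ) * (1/2) = 1 by norm_num, Real.rpow_one, hQeq] at h6
      have hQw : ∀ u, Q (T (wVec p k u)) ≤ (d:ℝ)^(1 - 2/r) * (D^2 * m^(2/r)) := by
        intro u
        have h1 : ‖T (wVec p k u)‖ ≤ D * m^(1/r) := by
          have := hTw_ub u; rwa [wVec_norm p k u hr0] at this
        have h2 : (∑ j, ‖T (wVec p k u) j‖ ^ (2:ℝ)) ^ (1/(2:ℝ))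
            ≤ (d:ℝ)^(1/2 - 1/r) * ‖T (wVec p k u)‖ := by
          rw [hnorm_r]
          have := aux_root_holder (fun j => ‖T (wVec p k u) j‖)
            (fun j => norm_nonneg _) (by norm_num : (0:ℝ) < 2) hr2
          simpa using this
        set X : ℝ := (∑ j, ‖T (wVec p k u) j‖ ^ (2:ℝ)) ^ (1/(2:ℝ)) with hX_def
        have hX0 : 0 ≤ X :=
          Real.rpow_nonneg (Finset.sum_nonneg fun j _ => Real.rpow_nonneg (norm_nonneg _) _) _
        have h3 : X ≤ (d:ℝ)^(1/2 - 1/r) * (D * m^(1/r)) :=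
          le_trans h2 (mul_le_mul_of_nonneg_left h1 (Real.rpow_nonneg hdR.le _))
        have h4 := pow_le_pow_left₀ hX0 h3 2
        have h5 : X^2 = Q (T (wVec p k u)) := by
          rw [hX_def,
            aux_rpow_sq (Finset.sum_nonneg fun j _ => Real.rpow_nonneg (norm_nonneg _) _),
            show (2:ℝ) * (1/2) = 1 by norm_num, Real.rpow_one, hQeq]
        rw [h5] at h4
        refine le_trans h4 (le_of_eq ?_)
        rw [mul_pow, mul_pow, aux_rpow_sq hdR.le, aux_rpow_sq hm0.le,
          show (2:ℝ) * (1/2 - 1/r) = 1 - 2/r by ring, show (2:ℝ) * (1/r) = 2/r by ring]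
      have hlow : m * m ≤ ∑ u, Q (T (wVec p k u)) := by
        rw [hPar]
        refine mul_le_mul_of_nonneg_left ?_ hm0.le
        calc m = ∑ _v : Fin k → Bool, (1:ℝ) := by
              rw [Finset.sum_const, Finset.card_univ, nsmul_eq_mul, mul_one, card_bool_fun]
          _ ≤ _ := Finset.sum_le_sum fun v _ => hQe v
      have hup : ∑ u, Q (T (wVec p k u)) ≤ m * ((d:ℝ)^(1 - 2/r) * (D^2 * m^(2/r))) := by
        calc ∑ u, Q (T (wVec p k u))
            ≤ ∑ _u : Fin k → Bool, (d:ℝ)^(1 - 2/r) * (D^2 * m^(2/r)) :=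
              Finset.sum_le_sum fun u _ => hQw u
          _ = _ := by rw [Finset.sum_const, Finset.card_univ, nsmul_eq_mul, card_bool_fun]
      have hkey : m ≤ (d:ℝ)^(1 - 2/r) * (D^2 * m^(2/r)) :=
        le_of_mul_le_mul_left (le_trans hlow hup) hm0
      rw [hE]
      refine aux_finish (Real.rpow_nonneg (by positivity) _) hD0 ?_
      rw [aux_rpow_sq (by positivity : (0:ℝ) ≤ m / d),
        show (2:ℝ) * (1/2 - 1/r) = 1 - 2/r by ring,
        Real.div_rpow hm0.le hdR.le, div_le_iff₀ (Real.rpow_pos_of_pos hdR _)]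
      have h8 : m * m^(-(2/r)) ≤ (d:ℝ)^(1 - 2/r) * D^2 * (m^(2/r) * m^(-(2/r))) := by
        calc m * m^(-(2/r)) ≤ ((d:ℝ)^(1 - 2/r) * (D^2 * m^(2/r))) * m^(-(2/r)) :=
              mul_le_mul_of_nonneg_right hkey (Real.rpow_nonneg hm0.le _)
          _ = _ := by ring
      rw [← Real.rpow_add hm0, add_neg_cancel, Real.rpow_zero, mul_one] at h8
      have h9 : m^(1 - 2/r) = m * m^(-(2/r)) := by
        nth_rewrite 2 [show m = m^(1:ℝ) from (Real.rpow_one m).symm]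
        rw [← Real.rpow_add hm0]
        congr 1
      rw [h9]
      calc m * m^(-(2/r)) ≤ (d:ℝ)^(1 - 2/r) * D^2 := h8
        _ = D^2 * (d:ℝ)^(1 - 2/r) := mul_comm _ _
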